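/- arXiv:math/0409080 — 2 statements merged into one kernel-verified Lean document; each statement's English description precedes it below -/
import Mathlib

section
/- Let M, N, P, Q be matroids with finite ground sets S, T, U, V respectively, with S disjoint from T and U disjoint from V, and suppose the free products M □ N and P □ Q are equal (in particular S ∪ T = U ∪ V) with |S| = |U|. Then rk(M) = rk(P). -/
open Set Matroid

/-- The rank of a set `X` in a matroid `M`: the maximum cardinality of an
independent subset of `X`.  For `X = M.E` this is the rank of `M`. -/
noncomputable def mrk {α : Type*} (M : Matroid α) (X : Set α) : ℕ :=
  sSup (Set.ncard '' {I | M.Indep I ∧ I ⊆ X})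

lemma mrk_finite_aux {α : Type*} {M : Matroid α} (hE : M.E.Finite) (X : Set α) :
    (Set.ncard '' {I | M.Indep I ∧ I ⊆ X}).Finite := by
  apply Set.Finite.image
  apply Set.Finite.subset hE.finite_subsets
  intro I hI
  exact hI.1.subset_ground

lemma le_mrk {α : Type*} {M : Matroid α} (hE : M.E.Finite) {I X : Set α}
    (hI : M.Indep I) (hIX : I ⊆ X) : I.ncard ≤ mrk M X :=
  le_csSup (mrk_finite_aux hE X).bddAbove ⟨I, ⟨hI, hIX⟩, rfl⟩

lemma mrk_exists {α : Type*} {M : Matroid α} (hE : M.E.Finite) (X : Set α) :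
    ∃ I, M.Indep I ∧ I ⊆ X ∧ I.ncard = mrk M X := by
  have hne : (Set.ncard '' {I | M.Indep I ∧ I ⊆ X}).Nonempty :=
    ⟨_, ⟨∅, ⟨M.empty_indep, empty_subset X⟩, rfl⟩⟩
  obtain ⟨I, hI, h⟩ := hne.csSup_mem (mrk_finite_aux hE X)
  exact ⟨I, hI.1, hI.2, h⟩

lemma mrk_indep {α : Type*} {M : Matroid α} (hE : M.E.Finite) {I : Set α}
    (hI : M.Indep I) : mrk M I = I.ncard := by
  refine le_antisymm ?_ (le_mrk hE hI subset_rfl)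
  refine csSup_le ⟨(∅ : Set α).ncard, ⟨∅, ⟨M.empty_indep, empty_subset I⟩, rfl⟩⟩ ?_
  rintro n ⟨J, ⟨hJ, hJI⟩, rfl⟩
  exact Set.ncard_le_ncard hJI (hE.subset hI.subset_ground)

lemma mrk_eq_of_restr {α : Type*} (M N L : Matroid α) (S T : Set α) (hST : Disjoint S T)
    (hLI : ∀ A : Set α, L.Indep A ↔ A ⊆ S ∪ T ∧ M.Indep (A ∩ S) ∧
      (A ∩ T).ncard - mrk N (A ∩ T) ≤ mrk M S - mrk M (A ∩ S)) :
    mrk L S = mrk M S := by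
  have hset : {I | L.Indep I ∧ I ⊆ S} = {I | M.Indep I ∧ I ⊆ S} := by
    ext I
    simp only [Set.mem_setOf_eq]
    constructor
    · rintro ⟨hL, hIS⟩
      have h := (hLI I).mp hL
      rw [Set.inter_eq_left.mpr hIS] at h
      exact ⟨h.2.1, hIS⟩
    · rintro ⟨hM, hIS⟩
      refine ⟨(hLI I).mpr ⟨hIS.trans Set.subset_union_left, ?_, ?_⟩, hIS⟩
      · rwa [Set.inter_eq_left.mpr hIS]
      · rw [(hST.mono_left hIS).inter_eq, Set.ncard_empty, Nat.zero_sub]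
        exact Nat.zero_le _
  unfold mrk
  rw [hset]

lemma union_inter_of_disj {α : Type*} {U V X Y : Set α} (hUV : Disjoint U V)
    (hX : X ⊆ U) (hY : Y ⊆ V) : (X ∪ Y) ∩ U = X := by
  rw [Set.union_inter_distrib_right, Set.inter_eq_left.mpr hX,
    Set.disjoint_iff_inter_eq_empty.mp (hUV.symm.mono_left hY), Set.union_empty]

lemma key_le {α : Type*} (P Q L : Matroid α) (U V A : Set α)
    (hU : U.Finite) (hV : V.Finite)
    (hPU : P.E = U) (hQV : Q.E = V) (hUV : Disjoint U V)
    (hLEf : L.E.Finite)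
    (hLI' : ∀ B : Set α, L.Indep B ↔ B ⊆ U ∪ V ∧ P.Indep (B ∩ U) ∧
      (B ∩ V).ncard - mrk Q (B ∩ V) ≤ mrk P U - mrk P (B ∩ U))
    (hA : A ⊆ U ∪ V) (hcard : A.ncard = U.ncard) :
    mrk P U ≤ mrk L A := by
  have hPE : P.E.Finite := hPU ▸ hU
  have hQE : Q.E.Finite := hQV ▸ hV
  set AU := A ∩ U with hAU
  set AV := A ∩ V with hAV
  have hAUU : AU ⊆ U := Set.inter_subset_right
  have hAVV : AV ⊆ V := Set.inter_subset_right
  have hAUf : AU.Finite := hU.subset hAUU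
  have hAVf : AV.Finite := hV.subset hAVV
  -- cardinality bookkeeping
  have hAsplit : A.ncard = AU.ncard + AV.ncard := by
    have : A = AU ∪ AV := by
      rw [hAU, hAV, ← Set.inter_union_distrib_left, Set.inter_eq_left.mpr hA]
    rw [this, Set.ncard_union_eq (hUV.mono hAUU hAVV) hAUf hAVf]
  have hUsplit : U.ncard = AU.ncard + (U \ A).ncard := by
    have : U = AU ∪ (U \ A) := by
      rw [hAU, Set.inter_comm, Set.inter_union_diff]
    conv_lhs => rw [this]
    rw [Set.ncard_union_eq (Set.disjoint_sdiff_right.mono_left Set.inter_subset_left)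
      hAUf hU.diff]
  -- pick witnesses
  obtain ⟨I, hI, hIU, hIcard⟩ := mrk_exists hPE U
  obtain ⟨Iu, hIu, hIuA, hIucard⟩ := mrk_exists hPE AU
  obtain ⟨J0, hJ0, hJ0A, hJ0card⟩ := mrk_exists hQE AV
  -- mrk P U ≤ mrk P AU + (U \ A).ncard
  have claim1 : mrk P U ≤ mrk P AU + (U \ A).ncard := by
    have hIsplit : I.ncard = (I ∩ A).ncard + (I \ A).ncard := by
      conv_lhs => rw [← Set.inter_union_diff I A]
      exact Set.ncard_union_eq (Set.disjoint_sdiff_right.mono_left Set.inter_subset_right)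
        ((hU.subset hIU).subset Set.inter_subset_left) (hU.subset hIU).diff
    have h1 : (I ∩ A).ncard ≤ mrk P AU := by
      refine le_mrk hPE (hI.subset Set.inter_subset_left) ?_
      rw [hAU]
      exact fun x hx => ⟨hx.2, hIU hx.1⟩
    have h2 : (I \ A).ncard ≤ (U \ A).ncard :=
      Set.ncard_le_ncard (Set.diff_subset_diff_left hIU) hU.diff
    omega
  set m := min (mrk P U - Iu.ncard) ((AV \ J0).ncard) with hm
  obtain ⟨K, hKsub, hKcard⟩ :=
    Set.exists_subset_card_eq (min_le_right (mrk P U - Iu.ncard) ((AV \ J0).ncard))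
  have hKAV : K ⊆ AV := hKsub.trans Set.diff_subset
  have hKf : K.Finite := hAVf.subset hKAV
  have hJ0f : J0.Finite := hAVf.subset hJ0A
  set B := Iu ∪ (J0 ∪ K) with hB
  have hIuU : Iu ⊆ U := hIuA.trans hAUU
  have hJKV : J0 ∪ K ⊆ V := Set.union_subset (hJ0A.trans hAVV) (hKAV.trans hAVV)
  have hBU : B ∩ U = Iu := union_inter_of_disj hUV hIuU hJKV
  have hBV : B ∩ V = J0 ∪ K := by
    rw [hB, Set.union_comm Iu]
    exact union_inter_of_disj hUV.symm hJKV hIuU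
  have hJKcard : (J0 ∪ K).ncard = J0.ncard + K.ncard :=
    Set.ncard_union_eq (Set.disjoint_sdiff_right.mono_right hKsub) hJ0f hKf
  have hmrkIu : mrk P Iu = Iu.ncard := mrk_indep hPE hIu
  have hIuleU : Iu.ncard ≤ mrk P U := le_mrk hPE hIu (hIuA.trans hAUU)
  have hJ0le : J0.ncard ≤ mrk Q (J0 ∪ K) := le_mrk hQE hJ0 Set.subset_union_left
  -- B is independent in L
  have hBind : L.Indep B := by
    rw [hLI' B, hBU, hBV]
    refine ⟨Set.union_subset (hIuU.trans Set.subset_union_left)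
      (hJKV.trans Set.subset_union_right), hIu, ?_⟩
    rw [hmrkIu]
    omega
  have hBA : B ⊆ A := Set.union_subset (hIuA.trans Set.inter_subset_left)
    (Set.union_subset (hJ0A.trans Set.inter_subset_left) (hKAV.trans Set.inter_subset_left))
  have hBcard : B.ncard = Iu.ncard + (J0.ncard + K.ncard) := by
    rw [hB, Set.ncard_union_eq (hUV.mono hIuU hJKV) (hU.subset hIuU) (hV.subset hJKV),
      hJKcard]
  have hBle : B.ncard ≤ mrk L A := le_mrk hLEf hBind hBA
  have hdiffcard : (AV \ J0).ncard = AV.ncard - J0.ncard := Set.ncard_diff hJ0A hJ0f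
  have hJ0AV : J0.ncard ≤ AV.ncard := Set.ncard_le_ncard hJ0A hAVf
  omega

/-- If the free products `M □ N` and `P □ Q` are equal (to a matroid `L`), where the
ground sets `S` of `M` and `U` of `P` have the same size, then `rk(M) = rk(P)`. -/
theorem stmt_13 {α : Type*} (M N P Q : Matroid α) (S T U V : Set α)
    (hS : S.Finite) (hT : T.Finite) (hU : U.Finite) (hV : V.Finite)
    (hMS : M.E = S) (hNT : N.E = T) (hPU : P.E = U) (hQV : Q.E = V)
    (hST : Disjoint S T) (hUV : Disjoint U V)
    (L : Matroid α)
    (hLE : L.E = S ∪ T)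
    (hLI : ∀ A : Set α, L.Indep A ↔ A ⊆ S ∪ T ∧ M.Indep (A ∩ S) ∧
      (A ∩ T).ncard - mrk N (A ∩ T) ≤ mrk M S - mrk M (A ∩ S))
    (hLE' : L.E = U ∪ V)
    (hLI' : ∀ A : Set α, L.Indep A ↔ A ⊆ U ∪ V ∧ P.Indep (A ∩ U) ∧
      (A ∩ V).ncard - mrk Q (A ∩ V) ≤ mrk P U - mrk P (A ∩ U))
    (hcard : S.ncard = U.ncard) :
    mrk M S = mrk P U := by
  have hEeq : S ∪ T = U ∪ V := by rw [← hLE, hLE']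
  have hLEf : L.E.Finite := hLE ▸ (hS.union hT)
  have h1 : mrk L S = mrk M S := mrk_eq_of_restr M N L S T hST hLI
  have h2 : mrk L U = mrk P U := mrk_eq_of_restr P Q L U V hUV hLI'
  have h3 : mrk P U ≤ mrk L S := by
    refine key_le P Q L U V S hU hV hPU hQV hUV hLEf hLI' ?_ hcard
    rw [← hEeq]; exact Set.subset_union_left
  have h4 : mrk M S ≤ mrk L U := by
    refine key_le M N L S T U hS hT hMS hNT hST hLEf hLI ?_ hcard.symm
    rw [hEeq]; exact Set.subset_union_left
  omega
end

section
/- Let M, N, P, Q be matroids with finite ground sets S, T, U, V respectively, with S disjoint from T and U disjoint from V, and suppose |S| = |U| and the free product M □ N is isomorphic to the free product P □ Q. Then M is isomorphic to P and N is isomorphic to Q. -/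
open Set Matroid

section basics
variable {α : Type*} {M : Matroid α}

lemma indep_ncard_le_mrk (hE : M.E.Finite) {I X : Set α} (hI : M.Indep I) (hIX : I ⊆ X) :
    I.ncard ≤ mrk M X := by
  apply le_csSup
  · refine ⟨M.E.ncard, ?_⟩
    rintro n ⟨J, ⟨hJ, _⟩, rfl⟩
    exact Set.ncard_le_ncard hJ.subset_ground hE
  · exact ⟨I, ⟨hI, hIX⟩, rfl⟩

lemma exists_mrk_basis (hE : M.E.Finite) (X : Set α) :
    ∃ I, M.Indep I ∧ I ⊆ X ∧ I.ncard = mrk M X := by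
  have h1 : (Set.ncard '' {I | M.Indep I ∧ I ⊆ X}).Nonempty :=
    ⟨0, ∅, ⟨M.empty_indep, Set.empty_subset X⟩, by simp⟩
  have h2 : BddAbove (Set.ncard '' {I | M.Indep I ∧ I ⊆ X}) := by
    refine ⟨M.E.ncard, ?_⟩
    rintro n ⟨J, ⟨hJ, _⟩, rfl⟩
    exact Set.ncard_le_ncard hJ.subset_ground hE
  obtain ⟨I, ⟨hI, hIX⟩, hcard⟩ := Nat.sSup_mem h1 h2
  exact ⟨I, hI, hIX, hcard⟩

lemma mrk_mono (hE : M.E.Finite) {X Y : Set α} (hXY : X ⊆ Y) : mrk M X ≤ mrk M Y := by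
  obtain ⟨I, hI, hIX, hc⟩ := exists_mrk_basis hE X
  rw [← hc]
  exact indep_ncard_le_mrk hE hI (hIX.trans hXY)

lemma mrk_le_ncard (hE : M.E.Finite) {X : Set α} (hX : X.Finite) : mrk M X ≤ X.ncard := by
  obtain ⟨I, hI, hIX, hc⟩ := exists_mrk_basis hE X
  rw [← hc]
  exact Set.ncard_le_ncard hIX hX

lemma mrk_indep_iff (hE : M.E.Finite) {I : Set α} (hIE : I ⊆ M.E) :
    M.Indep I ↔ mrk M I = I.ncard := by
  constructor
  · intro hI
    exact le_antisymm (mrk_le_ncard hE (hE.subset hIE)) (indep_ncard_le_mrk hE hI subset_rfl)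
  · intro h
    obtain ⟨J, hJ, hJI, hc⟩ := exists_mrk_basis hE I
    have : J = I := Set.eq_of_subset_of_ncard_le hJI (by rw [hc, h]) (hE.subset hIE)
    rwa [← this]

lemma mrk_empty (hE : M.E.Finite) : mrk M (∅ : Set α) = 0 :=
  Nat.le_zero.mp (by simpa using mrk_le_ncard hE (Set.finite_empty))

end basics

section formula

variable {α : Type*} {M N L : Matroid α} {S T : Set α}

/-- The rank formula for the free product. -/
lemma freeProd_mrk_formula
    (hS : S.Finite) (hT : T.Finite)
    (hMS : M.E = S) (hNT : N.E = T) (hST : Disjoint S T) (hLE : L.E = S ∪ T)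
    (hLI : ∀ A : Set α, L.Indep A ↔ A ⊆ S ∪ T ∧ M.Indep (A ∩ S) ∧
      (A ∩ T).ncard - mrk N (A ∩ T) ≤ mrk M S - mrk M (A ∩ S))
    {X : Set α} (hX : X ⊆ S ∪ T) :
    mrk L X = min (mrk M (X ∩ S) + (X ∩ T).ncard) (mrk M S + mrk N (X ∩ T)) := by
  have hME : M.E.Finite := hMS ▸ hS
  have hNE : N.E.Finite := hNT ▸ hT
  have hLEf : L.E.Finite := hLE ▸ hS.union hT
  have hXf : X.Finite := (hS.union hT).subset hX
  have hdisj : ∀ x, x ∈ S → x ∈ T → False := fun x hx hy =>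
    Set.disjoint_left.mp hST hx hy
  have hrSle : ∀ Y : Set α, mrk M (Y) ≤ mrk M S := by
    intro Y
    have := mrk_mono hME (Set.inter_subset_right (s := Y) (t := M.E))
    calc mrk M Y = mrk M (Y ∩ M.E) := by
          apply le_antisymm ?_ (mrk_mono hME Set.inter_subset_left)
          obtain ⟨I, hI, hIY, hc⟩ := exists_mrk_basis hME Y
          rw [← hc]
          exact indep_ncard_le_mrk hME hI (Set.subset_inter hIY hI.subset_ground)
      _ ≤ mrk M M.E := mrk_mono hME Set.inter_subset_right
      _ = mrk M S := by rw [hMS]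
  apply le_antisymm
  · -- upper bound
    obtain ⟨I, hI, hIX, hc⟩ := exists_mrk_basis hLEf X
    rw [← hc]
    have hIf : I.Finite := hXf.subset hIX
    obtain ⟨-, hIS, hineq⟩ := (hLI I).mp hI
    have hIsplit : I.ncard = (I ∩ S).ncard + (I ∩ T).ncard := by
      have heq : I = (I ∩ S) ∪ (I ∩ T) := by
        ext x
        constructor
        · intro hx
          rcases hX (hIX hx) with h | h
          · exact Or.inl ⟨hx, h⟩
          · exact Or.inr ⟨hx, h⟩
        · rintro (⟨h, -⟩ | ⟨h, -⟩) <;> exact h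
      nth_rewrite 1 [heq]
      rw [Set.ncard_union_eq
        (Set.disjoint_of_subset Set.inter_subset_right Set.inter_subset_right hST)
        (hIf.subset Set.inter_subset_left) (hIf.subset Set.inter_subset_left)]
    have hISc : (I ∩ S).ncard = mrk M (I ∩ S) :=
      ((mrk_indep_iff hME hIS.subset_ground).mp hIS).symm
    have hISle : mrk M (I ∩ S) ≤ mrk M (X ∩ S) :=
      mrk_mono hME (Set.inter_subset_inter_left _ hIX)
    have hITle : mrk N (I ∩ T) ≤ mrk N (X ∩ T) :=
      mrk_mono hNE (Set.inter_subset_inter_left _ hIX)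
    have hITcard : (I ∩ T).ncard ≤ (X ∩ T).ncard :=
      Set.ncard_le_ncard (Set.inter_subset_inter_left _ hIX) (hT.subset Set.inter_subset_right)
    have hISS : mrk M (I ∩ S) ≤ mrk M S := hrSle _
    refine le_min ?_ ?_
    · omega
    · -- |I| ≤ rk M S + rk N (X∩T)
      have hITN : (I ∩ T).ncard ≤ mrk N (I ∩ T) + (mrk M S - mrk M (I ∩ S)) := by omega
      omega
  · -- lower bound : construct independent set
    obtain ⟨B, hB, hBX, hBc⟩ := exists_mrk_basis hME (X ∩ S)
    obtain ⟨J₀, hJ₀, hJ₀X, hJ₀c⟩ := exists_mrk_basis hNE (X ∩ T)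
    set m : ℕ := min (X ∩ T).ncard (mrk N (X ∩ T) + (mrk M S - mrk M (X ∩ S))) with hm
    have hJ₀m : J₀.ncard ≤ m := by
      have h1 : mrk N (X ∩ T) ≤ (X ∩ T).ncard :=
        mrk_le_ncard hNE (hT.subset Set.inter_subset_right)
      omega
    have hmle : m ≤ (X ∩ T).ncard := min_le_left _ _
    obtain ⟨J, hJ₀J, hJX, hJc⟩ := Set.exists_subsuperset_card_eq hJ₀X (by omega) hmle
    have hJN : mrk N J = mrk N (X ∩ T) := by
      apply le_antisymm (mrk_mono hNE hJX)
      rw [← hJ₀c]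
      exact indep_ncard_le_mrk hNE hJ₀ hJ₀J
    have hBS : B ⊆ S := hBX.trans Set.inter_subset_right
    have hJT : J ⊆ T := hJX.trans Set.inter_subset_right
    have hIindep : L.Indep (B ∪ J) := by
      rw [hLI]
      have hBJS : (B ∪ J) ∩ S = B := by
        ext x; constructor
        · rintro ⟨hx | hx, hxS⟩
          · exact hx
          · exact absurd hxS (fun h => hdisj x h (hJT hx))
        · intro hx; exact ⟨Or.inl hx, hBS hx⟩
      have hBJT : (B ∪ J) ∩ T = J := by
        ext x; constructor
        · rintro ⟨hx | hx, hxT⟩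
          · exact absurd hxT (fun h => hdisj x (hBS hx) h)
          · exact hx
        · intro hx; exact ⟨Or.inr hx, hJT hx⟩
      refine ⟨?_, ?_, ?_⟩
      · exact Set.union_subset (hBS.trans Set.subset_union_left)
          (hJT.trans Set.subset_union_right)
      · rw [hBJS]; exact hB
      · rw [hBJS, hBJT, hJN]
        have h2 : mrk M B = B.ncard := (mrk_indep_iff hME hB.subset_ground).mp hB
        have h3 : J.ncard ≤ mrk N (X ∩ T) + (mrk M S - mrk M (X ∩ S)) := by
          rw [hJc]; exact min_le_right _ _
        have h4 : mrk M (X ∩ S) ≤ mrk M S := hrSle _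
        omega
    have hIX2 : B ∪ J ⊆ X :=
      Set.union_subset (hBX.trans Set.inter_subset_left) (hJX.trans Set.inter_subset_left)

    have hc2 : (B ∪ J).ncard = B.ncard + J.ncard := by
      rw [Set.ncard_union_eq (Set.disjoint_of_subset hBS hJT hST)
        (hS.subset hBS) (hT.subset hJT)]
    have := indep_ncard_le_mrk hLEf hIindep hIX2
    have h4 : mrk M (X ∩ S) ≤ mrk M S := hrSle _
    have h1 : mrk N (X ∩ T) ≤ (X ∩ T).ncard :=
      mrk_le_ncard hNE (hT.subset Set.inter_subset_right)
    omega

end formula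

section derived

variable {α : Type*} {M N L : Matroid α} {S T : Set α}
variable (hS : S.Finite) (hT : T.Finite)
  (hMS : M.E = S) (hNT : N.E = T) (hST : Disjoint S T) (hLE : L.E = S ∪ T)
  (hLI : ∀ A : Set α, L.Indep A ↔ A ⊆ S ∪ T ∧ M.Indep (A ∩ S) ∧
      (A ∩ T).ncard - mrk N (A ∩ T) ≤ mrk M S - mrk M (A ∩ S))

include hS hT hMS hNT hST hLE hLI

lemma mrk_L_of_subset_S {Y : Set α} (hY : Y ⊆ S) : mrk L Y = mrk M Y := by
  have hYS : Y ∩ S = Y := Set.inter_eq_self_of_subset_left hY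
  have hYT : Y ∩ T = ∅ := by
    apply Set.eq_empty_iff_forall_notMem.mpr
    rintro x ⟨hx1, hx2⟩
    exact Set.disjoint_left.mp hST (hY hx1) hx2
  have := freeProd_mrk_formula hS hT hMS hNT hST hLE hLI (hY.trans Set.subset_union_left)
  rw [hYS, hYT] at this
  have hNE : N.E.Finite := hNT ▸ hT
  have hME : M.E.Finite := hMS ▸ hS
  rw [mrk_empty hNE, Set.ncard_empty] at this
  have h1 : mrk M Y ≤ mrk M S := by
    rw [← Set.inter_eq_self_of_subset_left hY, ← hMS]
    calc mrk M (Y ∩ M.E) ≤ mrk M M.E := mrk_mono hME Set.inter_subset_right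
      _ = _ := by rw [hMS, ← hMS]
  omega

lemma mrk_L_S : mrk L S = mrk M S :=
  mrk_L_of_subset_S hS hT hMS hNT hST hLE hLI subset_rfl

lemma mrk_L_S_union {Z : Set α} (hZ : Z ⊆ T) : mrk L (S ∪ Z) = mrk M S + mrk N Z := by
  have h1 : (S ∪ Z) ∩ S = S := by
    rw [Set.union_inter_cancel_left]
  have h2 : (S ∪ Z) ∩ T = Z := by
    ext x; constructor
    · rintro ⟨hx | hx, hxT⟩
      · exact absurd hxT (Set.disjoint_left.mp hST hx)
      · exact hx
    · intro hx; exact ⟨Or.inr hx, hZ hx⟩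
  have := freeProd_mrk_formula hS hT hMS hNT hST hLE hLI
    (Set.union_subset Set.subset_union_left (hZ.trans Set.subset_union_right))
  rw [h1, h2] at this
  have hNE : N.E.Finite := hNT ▸ hT
  have hZN : mrk N Z ≤ Z.ncard := mrk_le_ncard hNE (hT.subset hZ)
  omega

lemma indep_L_iff_M {I : Set α} (hI : I ⊆ S) : L.Indep I ↔ M.Indep I := by
  rw [hLI]
  have hIS : I ∩ S = I := Set.inter_eq_self_of_subset_left hI
  have hIT : I ∩ T = ∅ := by
    apply Set.eq_empty_iff_forall_notMem.mpr
    rintro x ⟨hx1, hx2⟩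
    exact Set.disjoint_left.mp hST (hI hx1) hx2
  rw [hIS, hIT]
  have hNE : N.E.Finite := hNT ▸ hT
  simp [mrk_empty hNE, hI.trans Set.subset_union_left]

lemma indep_N_iff {Z : Set α} (hZ : Z ⊆ T) :
    N.Indep Z ↔ mrk L (S ∪ Z) = mrk L S + Z.ncard := by
  have hNE : N.E.Finite := hNT ▸ hT
  rw [mrk_L_S_union hS hT hMS hNT hST hLE hLI hZ, mrk_L_S hS hT hMS hNT hST hLE hLI,
    mrk_indep_iff hNE (hNT ▸ hZ)]
  omega

/-- The key intrinsic identity: `S` is a "free separator" of `L`. -/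
lemma freeSep_identity {X : Set α} (hX : X ⊆ S ∪ T) :
    mrk L X = min (mrk L (X ∩ S) + (X \ S).ncard) (mrk L (X ∪ S)) := by
  have hXS : X \ S = X ∩ T := by
    ext x; constructor
    · rintro ⟨hx1, hx2⟩
      rcases hX hx1 with h | h
      · exact absurd h hx2
      · exact ⟨hx1, h⟩
    · rintro ⟨hx1, hx2⟩
      exact ⟨hx1, fun h => Set.disjoint_left.mp hST h hx2⟩
  have hXU : X ∪ S = S ∪ (X ∩ T) := by
    ext x; constructor
    · rintro (hx | hx)
      · rcases hX hx with h | h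
        · exact Or.inl h
        · exact Or.inr ⟨hx, h⟩
      · exact Or.inl hx
    · rintro (hx | ⟨hx, -⟩)
      · exact Or.inr hx
      · exact Or.inl hx
  rw [hXS, hXU, mrk_L_of_subset_S hS hT hMS hNT hST hLE hLI Set.inter_subset_right,
    mrk_L_S_union hS hT hMS hNT hST hLE hLI Set.inter_subset_right,
    freeProd_mrk_formula hS hT hMS hNT hST hLE hLI hX]

end derived

section transport

/-- Image of a set under an equivalence of set-subtypes. -/
def imFun {γ δ : Type*} {s : Set γ} {t : Set δ} (e : s ≃ t) (X : Set γ) : Set δ :=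
  Subtype.val '' (e '' (Subtype.val ⁻¹' X))

variable {γ δ : Type*} {s : Set γ} {t : Set δ} (e : s ≃ t)

lemma imFun_subset (X : Set γ) : imFun e X ⊆ t := by
  rintro x ⟨y, -, rfl⟩; exact y.2

lemma imFun_mono {X Y : Set γ} (h : X ⊆ Y) : imFun e X ⊆ imFun e Y :=
  Set.image_mono (Set.image_mono (Set.preimage_mono h))

lemma imFun_ncard (X : Set γ) (hX : X ⊆ s) : (imFun e X).ncard = X.ncard := by
  unfold imFun
  rw [Set.ncard_image_of_injective _ Subtype.val_injective,
    Set.ncard_image_of_injective _ e.injective]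
  have : Subtype.val '' (Subtype.val ⁻¹' X : Set s) = X := by
    rw [Subtype.image_preimage_coe, Set.inter_eq_self_of_subset_right hX]
  conv_rhs => rw [← this, Set.ncard_image_of_injective _ Subtype.val_injective]

lemma imFun_union (X Y : Set γ) : imFun e (X ∪ Y) = imFun e X ∪ imFun e Y := by
  unfold imFun
  rw [Set.preimage_union, Set.image_union, Set.image_union]

lemma imFun_inter (X Y : Set γ) : imFun e (X ∩ Y) = imFun e X ∩ imFun e Y := by
  unfold imFun
  rw [Set.preimage_inter, Set.image_inter e.injective, Set.image_inter Subtype.val_injective]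

lemma imFun_diff (X Y : Set γ) : imFun e (X \ Y) = imFun e X \ imFun e Y := by
  unfold imFun
  rw [Set.preimage_diff, Set.image_diff e.injective, Set.image_diff Subtype.val_injective]

lemma imFun_symm_imFun (X : Set γ) (hX : X ⊆ s) : imFun e.symm (imFun e X) = X := by
  unfold imFun
  rw [Set.preimage_image_eq _ Subtype.val_injective]
  simp only [Equiv.symm_image_image]
  rw [Subtype.image_preimage_coe, Set.inter_eq_self_of_subset_right hX]

lemma imFun_imFun_symm (W : Set δ) (hW : W ⊆ t) : imFun e (imFun e.symm W) = W := by
  have := imFun_symm_imFun e.symm W hW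
  simpa using this

end transport

section mrk_transport

variable {α β : Type*} {L : Matroid α} {L' : Matroid β}

lemma imFun_indep (e : ↥L.E ≃ ↥L'.E)
    (he : ∀ I : Set ↥L.E, L.Indep ((↑) '' I) ↔ L'.Indep ((↑) '' (e '' I)))
    {X : Set α} (hX : X ⊆ L.E) : L.Indep X ↔ L'.Indep (imFun e X) := by
  have h := he (Subtype.val ⁻¹' X)
  rwa [Subtype.image_preimage_coe, Set.inter_eq_self_of_subset_right hX] at h

lemma imFun_mrk (e : ↥L.E ≃ ↥L'.E)
    (he : ∀ I : Set ↥L.E, L.Indep ((↑) '' I) ↔ L'.Indep ((↑) '' (e '' I)))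
    (hEf : L.E.Finite) (hE'f : L'.E.Finite)
    {X : Set α} (hX : X ⊆ L.E) : mrk L' (imFun e X) = mrk L X := by
  have hsymm : ∀ J : Set ↥L'.E, L'.Indep ((↑) '' J) ↔ L.Indep ((↑) '' (e.symm '' J)) := by
    intro J
    have := he (e.symm '' J)
    simp only [Equiv.image_symm_image] at this
    exact this.symm
  apply le_antisymm
  · obtain ⟨I', hI', hI'X, hc⟩ := exists_mrk_basis hE'f (imFun e X)
    rw [← hc]
    have hI'E : I' ⊆ L'.E := hI'.subset_ground
    have hIind : L.Indep (imFun e.symm I') :=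
      (imFun_indep e.symm hsymm hI'E).mp hI'
    have hIsub : imFun e.symm I' ⊆ X := by
      have h1 : imFun e.symm I' ⊆ imFun e.symm (imFun e X) := imFun_mono _ hI'X
      rwa [imFun_symm_imFun e X hX] at h1
    have := indep_ncard_le_mrk hEf hIind hIsub
    rwa [imFun_ncard e.symm I' hI'E] at this
  · obtain ⟨I, hI, hIX, hc⟩ := exists_mrk_basis hEf X
    rw [← hc]
    have := indep_ncard_le_mrk hE'f ((imFun_indep e he hI.subset_ground).mp hI)
      (imFun_mono e hIX)
    rwa [imFun_ncard e I hI.subset_ground] at this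

end mrk_transport

section core

variable {α : Type*} {L : Matroid α} {S T U₀ : Set α}
variable (hS : S.Finite) (hT : T.Finite) (hST : Disjoint S T) (hU₀ : U₀ ⊆ S ∪ T)
  (hIS : ∀ X ⊆ S ∪ T, mrk L X = min (mrk L (X ∩ S) + (X \ S).ncard) (mrk L (X ∪ S)))
  (hIU : ∀ X ⊆ S ∪ T, mrk L X = min (mrk L (X ∩ U₀) + (X \ U₀).ncard) (mrk L (X ∪ U₀)))
  (hd : (S \ (S ∩ U₀)).ncard = (U₀ \ (S ∩ U₀)).ncard)

include hS hT hST hU₀ hIS hIU hd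

/-- Claim C, form 1 : for `Y ⊆ S \ A`, assuming `d > 0`. -/
lemma claimC1 (hdpos : (S \ (S ∩ U₀)).ncard ≠ 0) {Y : Set α} (hY : Y ⊆ S \ (S ∩ U₀)) :
    mrk L (S ∩ U₀ ∪ Y) = min (mrk L (S ∩ U₀) + Y.ncard) (mrk L (S ∪ U₀)) := by
  set A := S ∩ U₀ with hA
  have hkey : ∀ x ∈ Y, x ∈ S ∧ x ∉ U₀ := by
    intro x hx
    obtain ⟨h1, h2⟩ := hY hx
    exact ⟨h1, fun h => h2 ⟨h1, h⟩⟩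
  have hAY_sub : A ∪ Y ⊆ S ∪ T := by
    intro x hx
    rcases hx with h | h
    · exact Or.inl h.1
    · exact Or.inl (hkey x h).1
  have hUY_sub : U₀ ∪ Y ⊆ S ∪ T := by
    intro x hx
    rcases hx with h | h
    · exact hU₀ h
    · exact Or.inl (hkey x h).1
  have e1 : (A ∪ Y) ∩ U₀ = A := by
    ext x
    have := fun h => (hkey x h).2
    simp only [Set.mem_inter_iff, Set.mem_union, hA]
    tauto
  have e2 : (A ∪ Y) \ U₀ = Y := by
    ext x
    have h1 := fun h => (hkey x h).2
    simp only [Set.mem_diff, Set.mem_union, Set.mem_inter_iff, hA]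
    tauto
  have e3 : (A ∪ Y) ∪ U₀ = U₀ ∪ Y := by
    ext x
    simp only [Set.mem_union, Set.mem_inter_iff, hA]
    tauto
  have e4 : (U₀ ∪ Y) ∩ S = A ∪ Y := by
    ext x
    have h1 := fun h => (hkey x h).1
    simp only [Set.mem_union, Set.mem_inter_iff, hA]
    tauto
  have e5 : (U₀ ∪ Y) \ S = U₀ \ A := by
    ext x
    have h1 := fun h => (hkey x h).1
    simp only [Set.mem_diff, Set.mem_union, Set.mem_inter_iff, hA]
    tauto
  have e6 : (U₀ ∪ Y) ∪ S = S ∪ U₀ := by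
    ext x
    have h1 := fun h => (hkey x h).1
    simp only [Set.mem_union]
    tauto
  have q1 := hIU (A ∪ Y) hAY_sub
  rw [e1, e2, e3] at q1
  have q2 := hIS (U₀ ∪ Y) hUY_sub
  rw [e4, e5, e6, ← hd] at q2
  omega

/-- Claim C, form 2 : for `Y ⊆ U₀ \ A`, assuming `d > 0`. -/
lemma claimC2 (hdpos : (S \ (S ∩ U₀)).ncard ≠ 0) {Y : Set α} (hY : Y ⊆ U₀ \ (S ∩ U₀)) :
    mrk L (S ∩ U₀ ∪ Y) = min (mrk L (S ∩ U₀) + Y.ncard) (mrk L (S ∪ U₀)) := by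
  set A := S ∩ U₀ with hA
  have hkey : ∀ x ∈ Y, x ∈ U₀ ∧ x ∉ S := by
    intro x hx
    obtain ⟨h1, h2⟩ := hY hx
    exact ⟨h1, fun h => h2 ⟨h, h1⟩⟩
  have hAY_sub : A ∪ Y ⊆ S ∪ T := by
    intro x hx
    rcases hx with h | h
    · exact Or.inl h.1
    · exact hU₀ (hkey x h).1
  have hSY_sub : S ∪ Y ⊆ S ∪ T := by
    intro x hx
    rcases hx with h | h
    · exact Or.inl h
    · exact hU₀ (hkey x h).1
  have e1 : (A ∪ Y) ∩ S = A := by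
    ext x
    have := fun h => (hkey x h).2
    simp only [Set.mem_inter_iff, Set.mem_union, hA]
    tauto
  have e2 : (A ∪ Y) \ S = Y := by
    ext x
    have h1 := fun h => (hkey x h).2
    simp only [Set.mem_diff, Set.mem_union, Set.mem_inter_iff, hA]
    tauto
  have e3 : (A ∪ Y) ∪ S = S ∪ Y := by
    ext x
    simp only [Set.mem_union, Set.mem_inter_iff, hA]
    tauto
  have e4 : (S ∪ Y) ∩ U₀ = A ∪ Y := by
    ext x
    have h1 := fun h => (hkey x h).1
    simp only [Set.mem_union, Set.mem_inter_iff, hA]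
    tauto
  have e5 : (S ∪ Y) \ U₀ = S \ A := by
    ext x
    have h1 := fun h => (hkey x h).1
    simp only [Set.mem_diff, Set.mem_union, Set.mem_inter_iff, hA]
    tauto
  have e6 : (S ∪ Y) ∪ U₀ = S ∪ U₀ := by
    ext x
    have h1 := fun h => (hkey x h).1
    simp only [Set.mem_union]
    tauto
  have q1 := hIS (A ∪ Y) hAY_sub
  rw [e1, e2, e3] at q1
  have q2 := hIU (S ∪ Y) hSY_sub
  rw [e4, e5, e6] at q2
  omega

end core

section key

variable {α : Type*} {L : Matroid α} {S T U₀ : Set α}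
variable (hS : S.Finite) (hT : T.Finite) (hST : Disjoint S T) (hU₀ : U₀ ⊆ S ∪ T)
  (hIS : ∀ X ⊆ S ∪ T, mrk L X = min (mrk L (X ∩ S) + (X \ S).ncard) (mrk L (X ∪ S)))
  (hIU : ∀ X ⊆ S ∪ T, mrk L X = min (mrk L (X ∩ U₀) + (X \ U₀).ncard) (mrk L (X ∪ U₀)))
  (hd : (S \ (S ∩ U₀)).ncard = (U₀ \ (S ∩ U₀)).ncard)

include hS hT hST hU₀ hIS hIU hd

lemma keyS {X Y Y' : Set α} (hX : X ⊆ S ∩ U₀) (hY : Y ⊆ S \ (S ∩ U₀))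
    (hY' : Y' ⊆ U₀ \ (S ∩ U₀)) (hk : Y.ncard = Y'.ncard) :
    mrk L (X ∪ Y) = mrk L (X ∪ Y') := by
  set A := S ∩ U₀ with hA
  by_cases hdz : (S \ A).ncard = 0
  · have hYe : Y = ∅ := by
      have h1 : S \ A = ∅ := Set.ncard_eq_zero (hS.subset Set.diff_subset) |>.mp hdz
      exact Set.subset_eq_empty hY h1
    have hY'e : Y' = ∅ := by
      have h1 : U₀ \ A = ∅ := Set.ncard_eq_zero
        (((hS.union hT).subset hU₀).subset Set.diff_subset) |>.mp (by omega)
      exact Set.subset_eq_empty hY' h1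
    rw [hYe, hY'e]
  · have hXkey : ∀ x ∈ X, x ∈ S ∧ x ∈ U₀ := fun x hx => hX hx
    have hYkey : ∀ x ∈ Y, x ∈ S ∧ x ∉ U₀ := by
      intro x hx
      obtain ⟨h1, h2⟩ := hY hx
      exact ⟨h1, fun h => h2 ⟨h1, h⟩⟩
    have hY'key : ∀ x ∈ Y', x ∈ U₀ ∧ x ∉ S := by
      intro x hx
      obtain ⟨h1, h2⟩ := hY' hx
      exact ⟨h1, fun h => h2 ⟨h, h1⟩⟩
    have hXY_sub : X ∪ Y ⊆ S ∪ T := by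
      rintro x (h | h)
      · exact Or.inl (hXkey x h).1
      · exact Or.inl (hYkey x h).1
    have hXY'_sub : X ∪ Y' ⊆ S ∪ T := by
      rintro x (h | h)
      · exact Or.inl (hXkey x h).1
      · exact hU₀ (hY'key x h).1
    have hUY_sub : U₀ ∪ Y ⊆ S ∪ T := by
      rintro x (h | h)
      · exact hU₀ h
      · exact Or.inl (hYkey x h).1
    have hSY'_sub : S ∪ Y' ⊆ S ∪ T := by
      rintro x (h | h)
      · exact Or.inl h
      · exact hU₀ (hY'key x h).1
    -- ρ(X∪Y)
    have f1 : (X ∪ Y) ∩ U₀ = X := by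
      ext x
      have h1 := fun h => (hXkey x h).2
      have h2 := fun h => (hYkey x h).2
      simp only [Set.mem_inter_iff, Set.mem_union]
      tauto
    have f2 : (X ∪ Y) \ U₀ = Y := by
      ext x
      have h1 := fun h => (hXkey x h).2
      have h2 := fun h => (hYkey x h).2
      simp only [Set.mem_diff, Set.mem_union]
      tauto
    have f3 : (X ∪ Y) ∪ U₀ = U₀ ∪ Y := by
      ext x
      have h1 := fun h => (hXkey x h).2
      simp only [Set.mem_union]
      tauto
    have hq1 := hIU (X ∪ Y) hXY_sub
    rw [f1, f2, f3] at hq1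
    -- ρ(U₀∪Y)
    have e4 : (U₀ ∪ Y) ∩ S = A ∪ Y := by
      ext x
      have h1 := fun h => (hYkey x h).1
      simp only [Set.mem_union, Set.mem_inter_iff, hA]
      tauto
    have e5 : (U₀ ∪ Y) \ S = U₀ \ A := by
      ext x
      have h1 := fun h => (hYkey x h).1
      simp only [Set.mem_diff, Set.mem_union, Set.mem_inter_iff, hA]
      tauto
    have e6 : (U₀ ∪ Y) ∪ S = S ∪ U₀ := by
      ext x
      have h1 := fun h => (hYkey x h).1
      simp only [Set.mem_union]
      tauto
    have hq2 := hIS (U₀ ∪ Y) hUY_sub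
    rw [e4, e5, e6] at hq2
    -- ρ(A∪Y)
    have hq3 := claimC1 hS hT hST hU₀ hIS hIU hd hdz hY
    rw [← hA] at hq3
    -- ρ(X∪Y')
    have g1 : (X ∪ Y') ∩ S = X := by
      ext x
      have h1 := fun h => (hXkey x h).1
      have h2 := fun h => (hY'key x h).2
      simp only [Set.mem_inter_iff, Set.mem_union]
      tauto
    have g2 : (X ∪ Y') \ S = Y' := by
      ext x
      have h1 := fun h => (hXkey x h).1
      have h2 := fun h => (hY'key x h).2
      simp only [Set.mem_diff, Set.mem_union]
      tauto
    have g3 : (X ∪ Y') ∪ S = S ∪ Y' := by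
      ext x
      have h0 := fun h => (hXkey x h).1
      simp only [Set.mem_union]
      tauto
    have hq1' := hIS (X ∪ Y') hXY'_sub
    rw [g1, g2, g3] at hq1'
    -- ρ(S∪Y')
    have g4 : (S ∪ Y') ∩ U₀ = A ∪ Y' := by
      ext x
      have h1 := fun h => (hY'key x h).1
      simp only [Set.mem_union, Set.mem_inter_iff, hA]
      tauto
    have g5 : (S ∪ Y') \ U₀ = S \ A := by
      ext x
      have h1 := fun h => (hY'key x h).1
      simp only [Set.mem_diff, Set.mem_union, Set.mem_inter_iff, hA]
      tauto
    have g6 : (S ∪ Y') ∪ U₀ = S ∪ U₀ := by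
      ext x
      have h1 := fun h => (hY'key x h).1
      simp only [Set.mem_union]
      tauto
    have hq2' := hIU (S ∪ Y') hSY'_sub
    rw [g4, g5, g6] at hq2'
    have hq3' := claimC2 hS hT hST hU₀ hIS hIU hd hdz hY'
    rw [← hA] at hq3'
    omega

lemma keyN {Z₀ Y Y' : Set α} (hZ₀ : Z₀ ⊆ T \ U₀) (hY : Y ⊆ U₀ \ (S ∩ U₀))
    (hY' : Y' ⊆ S \ (S ∩ U₀)) (hk : Y.ncard = Y'.ncard) :
    mrk L (S ∪ Z₀ ∪ Y) = mrk L (U₀ ∪ Z₀ ∪ Y') := by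
  set A := S ∩ U₀ with hA
  have hdisj : ∀ x, x ∈ S → x ∈ T → False := fun x h1 h2 => Set.disjoint_left.mp hST h1 h2
  by_cases hdz : (S \ A).ncard = 0
  · have h1 : S \ A = ∅ := Set.ncard_eq_zero (hS.subset Set.diff_subset) |>.mp hdz
    have h2 : U₀ \ A = ∅ := Set.ncard_eq_zero
      (((hS.union hT).subset hU₀).subset Set.diff_subset) |>.mp (by omega)
    have hSA : S = A := by
      apply Set.Subset.antisymm _ Set.inter_subset_left
      intro x hx
      by_contra hc
      exact absurd (Set.eq_empty_iff_forall_notMem.mp h1 x) (by simp [hx, hc]; exact hc)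
    have hUA : U₀ = A := by
      apply Set.Subset.antisymm _ Set.inter_subset_right
      intro x hx
      by_contra hc
      exact absurd (Set.eq_empty_iff_forall_notMem.mp h2 x) (by simp [hx, hc]; exact hc)
    have hYe : Y = ∅ := Set.subset_eq_empty hY (by rw [← hUA] at h2 ⊢; exact h2)
    have hY'e : Y' = ∅ := Set.subset_eq_empty hY' h1
    rw [hYe, hY'e, hSA, hUA]
  · have hZkey : ∀ x ∈ Z₀, x ∈ T ∧ x ∉ U₀ ∧ x ∉ S := by
      intro x hx
      obtain ⟨h1, h2⟩ := hZ₀ hx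
      exact ⟨h1, h2, fun h => hdisj x h h1⟩
    have hYkey : ∀ x ∈ Y, x ∈ U₀ ∧ x ∉ S := by
      intro x hx
      obtain ⟨h1, h2⟩ := hY hx
      exact ⟨h1, fun h => h2 ⟨h, h1⟩⟩
    have hY'key : ∀ x ∈ Y', x ∈ S ∧ x ∉ U₀ := by
      intro x hx
      obtain ⟨h1, h2⟩ := hY' hx
      exact ⟨h1, fun h => h2 ⟨h1, h⟩⟩
    have hW_sub : S ∪ Z₀ ∪ Y ⊆ S ∪ T := by
      rintro x ((h | h) | h)
      · exact Or.inl h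
      · exact Or.inr (hZkey x h).1
      · exact hU₀ (hYkey x h).1
    have hW'_sub : U₀ ∪ Z₀ ∪ Y' ⊆ S ∪ T := by
      rintro x ((h | h) | h)
      · exact hU₀ h
      · exact Or.inr (hZkey x h).1
      · exact Or.inl (hY'key x h).1
    -- ρ(S∪Z₀∪Y) via hIU
    have f1 : (S ∪ Z₀ ∪ Y) ∩ U₀ = A ∪ Y := by
      ext x
      have h1 := fun h => (hZkey x h).2.1
      have h2 := fun h => (hYkey x h).1
      simp only [Set.mem_inter_iff, Set.mem_union, hA]
      tauto
    have f2 : (S ∪ Z₀ ∪ Y) \ U₀ = (S \ A) ∪ Z₀ := by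
      ext x
      have h1 := fun h => (hZkey x h).2.1
      have h2 := fun h => (hYkey x h).1
      simp only [Set.mem_diff, Set.mem_union, Set.mem_inter_iff, hA]
      tauto
    have f3 : (S ∪ Z₀ ∪ Y) ∪ U₀ = (S ∪ U₀) ∪ Z₀ := by
      ext x
      have h2 := fun h => (hYkey x h).1
      simp only [Set.mem_union]
      tauto
    have hq1 := hIU (S ∪ Z₀ ∪ Y) hW_sub
    rw [f1, f2, f3] at hq1
    have hcard1 : ((S \ A) ∪ Z₀).ncard = (S \ A).ncard + Z₀.ncard := by
      have hdj : Disjoint (S \ A) Z₀ := by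
        rw [Set.disjoint_left]
        intro x hx hx2
        exact (hZkey x hx2).2.2 hx.1
      rw [Set.ncard_union_eq hdj (hS.subset Set.diff_subset)
        (hT.subset (hZ₀.trans Set.diff_subset))]
    -- ρ(U₀∪Z₀∪Y') via hIS
    have g1 : (U₀ ∪ Z₀ ∪ Y') ∩ S = A ∪ Y' := by
      ext x
      have h1 := fun h => (hZkey x h).2.2
      have h2 := fun h => (hY'key x h).1
      simp only [Set.mem_inter_iff, Set.mem_union, hA]
      tauto
    have g2 : (U₀ ∪ Z₀ ∪ Y') \ S = (U₀ \ A) ∪ Z₀ := by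
      ext x
      have h1 := fun h => (hZkey x h).2.2
      have h2 := fun h => (hY'key x h).1
      simp only [Set.mem_diff, Set.mem_union, Set.mem_inter_iff, hA]
      tauto
    have g3 : (U₀ ∪ Z₀ ∪ Y') ∪ S = (S ∪ U₀) ∪ Z₀ := by
      ext x
      have h2 := fun h => (hY'key x h).1
      simp only [Set.mem_union]
      tauto
    have hq1' := hIS (U₀ ∪ Z₀ ∪ Y') hW'_sub
    rw [g1, g2, g3] at hq1'
    have hcard2 : ((U₀ \ A) ∪ Z₀).ncard = (U₀ \ A).ncard + Z₀.ncard := by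
      have hdj : Disjoint (U₀ \ A) Z₀ := by
        rw [Set.disjoint_left]
        intro x hx hx2
        exact (hZkey x hx2).2.1 hx.1
      rw [Set.ncard_union_eq hdj (((hS.union hT).subset hU₀).subset Set.diff_subset)
        (hT.subset (hZ₀.trans Set.diff_subset))]
    have hq2 := claimC2 hS hT hST hU₀ hIS hIU hd hdz hY
    have hq2' := claimC1 hS hT hST hU₀ hIS hIU hd hdz hY'
    rw [← hA] at hq2 hq2'
    omega

end key

/-- Two matroids are isomorphic if there is a bijection between their ground sets
carrying independent sets to independent sets in both directions. -/
def MatroidIso {α β : Type*} (M : Matroid α) (N : Matroid β) : Prop :=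
  ∃ e : M.E ≃ N.E, ∀ I : Set M.E,
    M.Indep ((↑) '' I) ↔ N.Indep ((↑) '' (e '' I))

/-- **Corollary 7.** If `M □ N ≅ P □ Q` and `|S| = |U|` (where `S`, `U` are the ground
sets of `M`, `P`), then `M ≅ P` and `N ≅ Q`. -/
theorem stmt_14 {α β : Type*} (M N : Matroid α) (P Q : Matroid β)
    (S T : Set α) (U V : Set β)
    (hS : S.Finite) (hT : T.Finite) (hU : U.Finite) (hV : V.Finite)
    (hMS : M.E = S) (hNT : N.E = T) (hPU : P.E = U) (hQV : Q.E = V)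
    (hST : Disjoint S T) (hUV : Disjoint U V)
    (L : Matroid α) (hLE : L.E = S ∪ T)
    (hLI : ∀ A : Set α, L.Indep A ↔ A ⊆ S ∪ T ∧ M.Indep (A ∩ S) ∧
      (A ∩ T).ncard - mrk N (A ∩ T) ≤ mrk M S - mrk M (A ∩ S))
    (L' : Matroid β) (hL'E : L'.E = U ∪ V)
    (hL'I : ∀ A : Set β, L'.Indep A ↔ A ⊆ U ∪ V ∧ P.Indep (A ∩ U) ∧
      (A ∩ V).ncard - mrk Q (A ∩ V) ≤ mrk P U - mrk P (A ∩ U))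
    (hcard : S.ncard = U.ncard)
    (hiso : MatroidIso L L') :
    MatroidIso M P ∧ MatroidIso N Q := by
  classical
  obtain ⟨e, he⟩ := hiso
  have hLEf : L.E.Finite := by rw [hLE]; exact hS.union hT
  have hL'Ef : L'.E.Finite := by rw [hL'E]; exact hU.union hV
  have hUE' : U ⊆ L'.E := by rw [hL'E]; exact Set.subset_union_left
  set U₀ : Set α := imFun e.symm U with hU₀def
  have hU₀E : U₀ ⊆ L.E := imFun_subset e.symm U
  have hU₀ST : U₀ ⊆ S ∪ T := by rw [← hLE]; exact hU₀E
  have hFU₀ : imFun e U₀ = U := imFun_imFun_symm e U hUE'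
  have hU₀card : U₀.ncard = U.ncard := imFun_ncard e.symm U hUE'
  set A : Set α := S ∩ U₀ with hAdef
  have hAS : A ⊆ S := Set.inter_subset_left
  have hAU₀ : A ⊆ U₀ := Set.inter_subset_right
  have hU₀f : U₀.Finite := (hS.union hT).subset hU₀ST
  have hd : (S \ A).ncard = (U₀ \ A).ncard := by
    have h1 : (S \ A).ncard = S.ncard - A.ncard := Set.ncard_diff hAS (hS.subset hAS)
    have h2 : (U₀ \ A).ncard = U₀.ncard - A.ncard := Set.ncard_diff hAU₀ (hS.subset hAS)
    have h3 : A.ncard ≤ S.ncard := Set.ncard_le_ncard hAS hS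
    have h4 : A.ncard ≤ U₀.ncard := Set.ncard_le_ncard hAU₀ hU₀f
    omega
  have hIS : ∀ X ⊆ S ∪ T, mrk L X = min (mrk L (X ∩ S) + (X \ S).ncard) (mrk L (X ∪ S)) :=
    fun X hX => freeSep_identity hS hT hMS hNT hST hLE hLI hX
  have hI'U : ∀ X ⊆ U ∪ V, mrk L' X = min (mrk L' (X ∩ U) + (X \ U).ncard) (mrk L' (X ∪ U)) :=
    fun X hX => freeSep_identity hU hV hPU hQV hUV hL'E hL'I hX
  have hmrkF : ∀ X ⊆ S ∪ T, mrk L' (imFun e X) = mrk L X := by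
    intro X hX
    exact imFun_mrk e he hLEf hL'Ef (by rw [hLE]; exact hX)
  have hIU : ∀ X ⊆ S ∪ T, mrk L X = min (mrk L (X ∩ U₀) + (X \ U₀).ncard) (mrk L (X ∪ U₀)) := by
    intro X hX
    have h0 := hI'U (imFun e X) (by rw [← hL'E]; exact imFun_subset e X)
    have ha : imFun e (X ∩ U₀) = imFun e X ∩ U := by rw [imFun_inter, hFU₀]
    have hb : imFun e (X \ U₀) = imFun e X \ U := by rw [imFun_diff, hFU₀]
    have hc : imFun e (X ∪ U₀) = imFun e X ∪ U := by rw [imFun_union, hFU₀]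
    rw [← ha, ← hb, ← hc, hmrkF X hX, hmrkF _ (Set.inter_subset_left.trans hX),
      hmrkF _ (Set.union_subset hX hU₀ST),
      imFun_ncard e _ (by rw [hLE]; exact Set.diff_subset.trans hX)] at h0
    exact h0
  have hSA_f : (S \ A).Finite := hS.subset Set.diff_subset
  have hUA_f : (U₀ \ A).Finite := hU₀f.subset Set.diff_subset
  have hne : Nonempty (↥(S \ A) ≃ ↥(U₀ \ A)) := by
    have hnc : Nat.card ↥(S \ A) = Nat.card ↥(U₀ \ A) := by
      rw [Nat.card_coe_set_eq, Nat.card_coe_set_eq, hd]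
    have i1 := hSA_f.to_subtype
    have i2 := hUA_f.to_subtype
    exact Finite.card_eq.mp hnc
  obtain ⟨ε⟩ := hne
  have hAmem : ∀ x ∈ S, x ∉ S \ A → x ∈ A := by
    intro x hx h
    by_contra hc
    exact h ⟨hx, hc⟩
  have hA'mem : ∀ x ∈ U₀, x ∉ U₀ \ A → x ∈ A := by
    intro x hx h
    by_contra hc
    exact h ⟨hx, hc⟩
  have heU : ∀ (z : α) (hz : z ∈ L.E), z ∈ U₀ → (↑(e ⟨z, hz⟩) : β) ∈ U := by
    intro z hz hzU
    rw [← hFU₀]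
    exact ⟨e ⟨z, hz⟩, ⟨⟨z, hz⟩, hzU, rfl⟩, rfl⟩
  have heV : ∀ (z : α) (hz : z ∈ L.E), z ∉ U₀ → (↑(e ⟨z, hz⟩) : β) ∈ V := by
    intro z hz hzU
    have h1 : (↑(e ⟨z, hz⟩) : β) ∈ U ∪ V := by rw [← hL'E]; exact (e ⟨z, hz⟩).2
    rcases h1 with h1 | h1
    · exfalso
      apply hzU
      rw [hU₀def]
      refine ⟨e.symm ⟨↑(e ⟨z, hz⟩), hUE' h1⟩, ⟨⟨↑(e ⟨z, hz⟩), hUE' h1⟩, h1, rfl⟩, ?_⟩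
      have : (⟨↑(e ⟨z, hz⟩), hUE' h1⟩ : ↥L'.E) = e ⟨z, hz⟩ := Subtype.ext rfl
      rw [this, Equiv.symm_apply_apply]
    · exact h1
  constructor
  · -- MatroidIso M P
    set F₁ : α → α := fun x => if h : x ∈ S \ A then (↑(ε ⟨x, h⟩) : α) else x with hF₁def
    have hεval : ∀ (x : α) (h : x ∈ S \ A), F₁ x = ↑(ε ⟨x, h⟩) := by
      intro x h; simp only [hF₁def, dif_pos h]
    have hF₁id : ∀ x ∈ A, F₁ x = x := by
      intro x hx
      have h : x ∉ S \ A := fun h => h.2 hx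
      simp only [hF₁def, dif_neg h]
    have hF₁mem : ∀ x ∈ S, F₁ x ∈ U₀ := by
      intro x hx
      by_cases h : x ∈ S \ A
      · rw [hεval x h]
        exact Set.diff_subset (ε ⟨x, h⟩).2
      · rw [hF₁id x (hAmem x hx h)]
        exact hAU₀ (hAmem x hx h)
    have hF₁inj : ∀ x ∈ S, ∀ y ∈ S, F₁ x = F₁ y → x = y := by
      intro x hx y hy hxy
      by_cases h1 : x ∈ S \ A <;> by_cases h2 : y ∈ S \ A
      · rw [hεval x h1, hεval y h2] at hxy
        exact congrArg Subtype.val (ε.injective (Subtype.coe_injective hxy))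
      · exfalso
        have hmx : F₁ x ∈ U₀ \ A := by rw [hεval x h1]; exact (ε ⟨x, h1⟩).2
        have hmy : F₁ y ∈ A := by rw [hF₁id y (hAmem y hy h2)]; exact hAmem y hy h2
        rw [hxy] at hmx
        exact hmx.2 hmy
      · exfalso
        have hmy : F₁ y ∈ U₀ \ A := by rw [hεval y h2]; exact (ε ⟨y, h2⟩).2
        have hmx : F₁ x ∈ A := by rw [hF₁id x (hAmem x hx h1)]; exact hAmem x hx h1
        rw [hxy] at hmx
        exact hmy.2 hmx
      · rw [hF₁id x (hAmem x hx h1), hF₁id y (hAmem y hy h2)] at hxy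
        exact hxy
    have hSmem : ∀ x : ↥M.E, (x : α) ∈ S := fun x => by rw [← hMS]; exact x.2
    have hF₁E : ∀ x : ↥M.E, F₁ ↑x ∈ L.E := fun x => hU₀E (hF₁mem ↑x (hSmem x))
    set φ : ↥M.E → ↥P.E := fun x =>
      ⟨↑(e ⟨F₁ ↑x, hF₁E x⟩), by rw [hPU]; exact heU _ _ (hF₁mem ↑x (hSmem x))⟩ with hφdef
    have hφval : ∀ x : ↥M.E, (↑(φ x) : β) = ↑(e ⟨F₁ ↑x, hF₁E x⟩) := fun x => rfl
    have hφinj : Function.Injective φ := by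
      intro x y hxy
      have h1 : (↑(φ x) : β) = ↑(φ y) := congrArg Subtype.val hxy
      rw [hφval x, hφval y] at h1
      have h3 : F₁ ↑x = F₁ ↑y := congrArg Subtype.val (e.injective (Subtype.coe_injective h1))
      exact Subtype.ext (hF₁inj _ (hSmem x) _ (hSmem y) h3)
    have hφsurj : Function.Surjective φ := by
      intro u
      have huU : (u : β) ∈ U := by rw [← hPU]; exact u.2
      set w : ↥L.E := e.symm ⟨↑u, hUE' huU⟩ with hw
      have hwU₀ : (w : α) ∈ U₀ := by
        rw [hU₀def]
        exact ⟨w, ⟨⟨↑u, hUE' huU⟩, huU, rfl⟩, rfl⟩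
      by_cases hwA : (w : α) ∈ A
      · have hmem : (↑w : α) ∈ M.E := by rw [hMS]; exact hAS hwA
        refine ⟨⟨↑w, hmem⟩, Subtype.ext ?_⟩
        calc (↑(φ ⟨↑w, hmem⟩) : β)
            = ↑(e ⟨F₁ ↑w, hF₁E ⟨↑w, hmem⟩⟩) := hφval _
          _ = ↑(e w) := congrArg (fun z : ↥L.E => (↑(e z) : β))
              (Subtype.ext (hF₁id ↑w hwA))
          _ = ↑u := by rw [hw, Equiv.apply_symm_apply]
      · have hwUA : (w : α) ∈ U₀ \ A := ⟨hwU₀, hwA⟩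
        set x : ↥(S \ A) := ε.symm ⟨↑w, hwUA⟩ with hx
        have hxS : (x : α) ∈ S \ A := x.2
        have hmemS : (x : α) ∈ M.E := by rw [hMS]; exact Set.diff_subset hxS
        refine ⟨⟨↑x, hmemS⟩, Subtype.ext ?_⟩
        have h1 : F₁ (x : α) = ↑w := by
          rw [hεval _ hxS]
          have h2 : (⟨↑x, hxS⟩ : ↥(S \ A)) = x := Subtype.ext rfl
          rw [h2, hx, Equiv.apply_symm_apply]
        calc (↑(φ ⟨↑x, hmemS⟩) : β)
            = ↑(e ⟨F₁ ↑x, hF₁E ⟨↑x, hmemS⟩⟩) := hφval _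
          _ = ↑(e w) := congrArg (fun z : ↥L.E => (↑(e z) : β)) (Subtype.ext h1)
          _ = ↑u := by rw [hw, Equiv.apply_symm_apply]
    refine ⟨Equiv.ofBijective φ ⟨hφinj, hφsurj⟩, ?_⟩
    intro I
    set I₀ : Set α := (↑) '' I with hI₀
    have hI₀S : I₀ ⊆ S := by rintro y ⟨x, hx, rfl⟩; exact hSmem x
    have hI₀f : I₀.Finite := hS.subset hI₀S
    have himg : (↑) '' (Equiv.ofBijective φ ⟨hφinj, hφsurj⟩ '' I) = imFun e (F₁ '' I₀) := by
      ext y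
      constructor
      · rintro ⟨u, ⟨x, hx, rfl⟩, rfl⟩
        exact ⟨e ⟨F₁ ↑x, hF₁E x⟩, ⟨⟨F₁ ↑x, hF₁E x⟩, ⟨↑x, ⟨x, hx, rfl⟩, rfl⟩, rfl⟩, rfl⟩
      · rintro ⟨v, ⟨wz, hwz, rfl⟩, rfl⟩
        obtain ⟨x0, ⟨x, hx, rfl⟩, hfx⟩ := hwz
        refine ⟨Equiv.ofBijective φ ⟨hφinj, hφsurj⟩ x, ⟨x, hx, rfl⟩, ?_⟩
        have hgoal : (↑(e ⟨F₁ ↑x, hF₁E x⟩) : β) = ↑(e wz) :=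
          congrArg (fun z : ↥L.E => (↑(e z) : β)) (Subtype.ext hfx)
        exact hgoal
    have himg1 : F₁ '' I₀ = (I₀ ∩ A) ∪ imFun ε (I₀ \ A) := by
      ext y
      constructor
      · rintro ⟨x, hx, rfl⟩
        by_cases h : x ∈ S \ A
        · right
          exact ⟨ε ⟨x, h⟩, ⟨⟨x, h⟩, ⟨hx, h.2⟩, rfl⟩, (hεval x h).symm⟩
        · left
          have hxA : x ∈ A := hAmem x (hI₀S hx) h
          rw [hF₁id x hxA]
          exact ⟨hx, hxA⟩
      · rintro (⟨hy, hyA⟩ | ⟨v, ⟨z, hz, rfl⟩, rfl⟩)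
        · exact ⟨y, hy, hF₁id y hyA⟩
        · exact ⟨↑z, hz.1, by rw [hεval ↑z z.2]⟩
    have hdiffsub : I₀ \ A ⊆ S \ A := fun x hx => ⟨hI₀S hx.1, hx.2⟩
    have hY'sub : imFun ε (I₀ \ A) ⊆ U₀ \ A := imFun_subset ε _
    have hY'card : (imFun ε (I₀ \ A)).ncard = (I₀ \ A).ncard :=
      imFun_ncard ε _ hdiffsub
    have hkey := keyS hS hT hST hU₀ST hIS hIU hd
      (Set.inter_subset_right (s := I₀) (t := A)) hdiffsub hY'sub hY'card.symm
    rw [Set.inter_union_diff, ← himg1] at hkey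
    have hcard1 : (F₁ '' I₀).ncard = I₀.ncard := by
      rw [himg1, Set.ncard_union_eq ?hdisj (hI₀f.inter_of_left A) (hUA_f.subset hY'sub),
        hY'card, Set.ncard_inter_add_ncard_diff_eq_ncard I₀ A hI₀f]
      case hdisj =>
        rw [Set.disjoint_left]
        intro x hx hx2
        exact (hY'sub hx2).2 hx.2
    have hF₁U₀ : F₁ '' I₀ ⊆ U₀ := by
      rw [himg1]
      exact Set.union_subset ((Set.inter_subset_right).trans hAU₀)
        (hY'sub.trans Set.diff_subset)
    have himsub : imFun e (F₁ '' I₀) ⊆ U := by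
      rw [← hFU₀]; exact imFun_mono e hF₁U₀
    have hstep1 : M.Indep I₀ ↔ L.Indep I₀ :=
      (indep_L_iff_M hS hT hMS hNT hST hLE hLI hI₀S).symm
    have hstep2 : L.Indep I₀ ↔ mrk L I₀ = I₀.ncard :=
      mrk_indep_iff hLEf (by rw [hLE]; exact hI₀S.trans Set.subset_union_left)
    have hstep3 : L.Indep (F₁ '' I₀) ↔ mrk L (F₁ '' I₀) = (F₁ '' I₀).ncard :=
      mrk_indep_iff hLEf (hF₁U₀.trans hU₀E)
    have hstep4 : L.Indep (F₁ '' I₀) ↔ L'.Indep (imFun e (F₁ '' I₀)) :=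
      imFun_indep e he (hF₁U₀.trans hU₀E)
    have hstep5 : L'.Indep (imFun e (F₁ '' I₀)) ↔ P.Indep (imFun e (F₁ '' I₀)) :=
      indep_L_iff_M hU hV hPU hQV hUV hL'E hL'I himsub
    rw [himg]
    rw [hstep1, hstep2, ← hstep5, ← hstep4, hstep3, hcard1, hkey]
  · -- MatroidIso N Q
    have hVE' : V ⊆ L'.E := by rw [hL'E]; exact Set.subset_union_right
    have hU₀AT : U₀ \ A ⊆ T := by
      intro z hz
      rcases hU₀ST hz.1 with h | h
      · exact absurd ⟨h, hz.1⟩ hz.2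
      · exact h
    set F₂ : α → α := fun x => if h : x ∈ U₀ \ A then (↑(ε.symm ⟨x, h⟩) : α) else x with hF₂def
    have hεval : ∀ (x : α) (h : x ∈ U₀ \ A), F₂ x = ↑(ε.symm ⟨x, h⟩) := by
      intro x h; simp only [hF₂def, dif_pos h]
    have hF₂id : ∀ (x : α), x ∉ U₀ \ A → F₂ x = x := by
      intro x hx; simp only [hF₂def, dif_neg hx]
    have hTU₀ : ∀ x ∈ T, x ∈ U₀ → x ∈ U₀ \ A := by
      intro x hx h
      exact ⟨h, fun hA2 => Set.disjoint_left.mp hST (hAS hA2) hx⟩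
    have hSAnotU₀ : ∀ z ∈ S \ A, z ∉ U₀ := by
      intro z hz hc
      exact hz.2 ⟨hz.1, hc⟩
    have hF₂mem : ∀ x ∈ T, F₂ x ∈ L.E ∧ F₂ x ∉ U₀ := by
      intro x hx
      by_cases h : x ∈ U₀ \ A
      · rw [hεval x h]
        have h2 : (↑(ε.symm ⟨x, h⟩) : α) ∈ S \ A := (ε.symm ⟨x, h⟩).2
        exact ⟨by rw [hLE]; exact Or.inl h2.1, hSAnotU₀ _ h2⟩
      · rw [hF₂id x h]
        refine ⟨by rw [hLE]; exact Or.inr hx, fun hc => h (hTU₀ x hx hc)⟩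
    have hF₂inj : ∀ x ∈ T, ∀ y ∈ T, F₂ x = F₂ y → x = y := by
      intro x hx y hy hxy
      by_cases h1 : x ∈ U₀ \ A <;> by_cases h2 : y ∈ U₀ \ A
      · rw [hεval x h1, hεval y h2] at hxy
        exact congrArg Subtype.val (ε.symm.injective (Subtype.coe_injective hxy))
      · exfalso
        have hmx : F₂ x ∈ S \ A := by rw [hεval x h1]; exact (ε.symm ⟨x, h1⟩).2
        rw [hF₂id y h2] at hxy
        rw [hxy] at hmx
        exact Set.disjoint_left.mp hST hmx.1 hy
      · exfalso
        have hmy : F₂ y ∈ S \ A := by rw [hεval y h2]; exact (ε.symm ⟨y, h2⟩).2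
        rw [hF₂id x h1] at hxy
        rw [← hxy] at hmy
        exact Set.disjoint_left.mp hST hmy.1 hx
      · rw [hF₂id x h1, hF₂id y h2] at hxy
        exact hxy
    have hTmem : ∀ x : ↥N.E, (x : α) ∈ T := fun x => by rw [← hNT]; exact x.2
    have hF₂E : ∀ x : ↥N.E, F₂ ↑x ∈ L.E := fun x => (hF₂mem ↑x (hTmem x)).1
    set φ₂ : ↥N.E → ↥Q.E := fun x =>
      ⟨↑(e ⟨F₂ ↑x, hF₂E x⟩), by
        rw [hQV]; exact heV _ _ (hF₂mem ↑x (hTmem x)).2⟩ with hφ₂def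
    have hφ₂val : ∀ x : ↥N.E, (↑(φ₂ x) : β) = ↑(e ⟨F₂ ↑x, hF₂E x⟩) := fun x => rfl
    have hφ₂inj : Function.Injective φ₂ := by
      intro x y hxy
      have h1 : (↑(φ₂ x) : β) = ↑(φ₂ y) := congrArg Subtype.val hxy
      rw [hφ₂val x, hφ₂val y] at h1
      have h3 : F₂ ↑x = F₂ ↑y := congrArg Subtype.val (e.injective (Subtype.coe_injective h1))
      exact Subtype.ext (hF₂inj _ (hTmem x) _ (hTmem y) h3)
    have hφ₂surj : Function.Surjective φ₂ := by
      intro v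
      have hvV : (v : β) ∈ V := by rw [← hQV]; exact v.2
      set w : ↥L.E := e.symm ⟨↑v, hVE' hvV⟩ with hw
      have hwnU₀ : (w : α) ∉ U₀ := by
        intro hc
        have h1 : (↑(e ⟨↑w, w.2⟩) : β) ∈ U := heU ↑w w.2 hc
        have h2 : (⟨(w : α), w.2⟩ : ↥L.E) = w := Subtype.ext rfl
        rw [h2, hw, Equiv.apply_symm_apply] at h1
        exact Set.disjoint_left.mp hUV h1 hvV
      have hwST : (w : α) ∈ S ∪ T := by rw [← hLE]; exact w.2
      rcases hwST with hwS | hwT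
      · have hwSA : (w : α) ∈ S \ A := ⟨hwS, fun hc => hwnU₀ (hAU₀ hc)⟩
        set x : ↥(U₀ \ A) := ε ⟨↑w, hwSA⟩ with hx
        have hxT : (x : α) ∈ T := hU₀AT x.2
        have hmemT : (x : α) ∈ N.E := by rw [hNT]; exact hxT
        refine ⟨⟨↑x, hmemT⟩, Subtype.ext ?_⟩
        have h1 : F₂ (x : α) = ↑w := by
          rw [hεval _ x.2]
          have h2 : (⟨↑x, x.2⟩ : ↥(U₀ \ A)) = x := Subtype.ext rfl
          rw [h2, hx, Equiv.symm_apply_apply]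
        calc (↑(φ₂ ⟨↑x, hmemT⟩) : β)
            = ↑(e ⟨F₂ ↑x, hF₂E ⟨↑x, hmemT⟩⟩) := hφ₂val _
          _ = ↑(e w) := congrArg (fun z : ↥L.E => (↑(e z) : β)) (Subtype.ext h1)
          _ = ↑v := by rw [hw, Equiv.apply_symm_apply]
      · have hmemT : (↑w : α) ∈ N.E := by rw [hNT]; exact hwT
        refine ⟨⟨↑w, hmemT⟩, Subtype.ext ?_⟩
        have h1 : F₂ (w : α) = ↑w := hF₂id _ (fun hc => hwnU₀ hc.1)
        calc (↑(φ₂ ⟨↑w, hmemT⟩) : β)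
            = ↑(e ⟨F₂ ↑w, hF₂E ⟨↑w, hmemT⟩⟩) := hφ₂val _
          _ = ↑(e w) := congrArg (fun z : ↥L.E => (↑(e z) : β)) (Subtype.ext h1)
          _ = ↑v := by rw [hw, Equiv.apply_symm_apply]
    refine ⟨Equiv.ofBijective φ₂ ⟨hφ₂inj, hφ₂surj⟩, ?_⟩
    intro I
    set Z : Set α := (↑) '' I with hZdef
    have hZT : Z ⊆ T := by rintro y ⟨x, hx, rfl⟩; exact hTmem x
    have hZf : Z.Finite := hT.subset hZT
    have himg : (↑) '' (Equiv.ofBijective φ₂ ⟨hφ₂inj, hφ₂surj⟩ '' I) = imFun e (F₂ '' Z) := by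
      ext y
      constructor
      · rintro ⟨u, ⟨x, hx, rfl⟩, rfl⟩
        exact ⟨e ⟨F₂ ↑x, hF₂E x⟩, ⟨⟨F₂ ↑x, hF₂E x⟩, ⟨↑x, ⟨x, hx, rfl⟩, rfl⟩, rfl⟩, rfl⟩
      · rintro ⟨v0, ⟨wz, hwz, rfl⟩, rfl⟩
        obtain ⟨x0, ⟨x, hx, rfl⟩, hfx⟩ := hwz
        refine ⟨Equiv.ofBijective φ₂ ⟨hφ₂inj, hφ₂surj⟩ x, ⟨x, hx, rfl⟩, ?_⟩
        have hgoal : (↑(e ⟨F₂ ↑x, hF₂E x⟩) : β) = ↑(e wz) :=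
          congrArg (fun z : ↥L.E => (↑(e z) : β)) (Subtype.ext hfx)
        exact hgoal
    have himg2 : F₂ '' Z = (Z \ U₀) ∪ imFun ε.symm (Z ∩ U₀) := by
      ext y
      constructor
      · rintro ⟨x, hx, rfl⟩
        by_cases h : x ∈ U₀ \ A
        · right
          exact ⟨ε.symm ⟨x, h⟩, ⟨⟨x, h⟩, ⟨hx, h.1⟩, rfl⟩, (hεval x h).symm⟩
        · left
          rw [hF₂id x h]
          exact ⟨hx, fun hc => h (hTU₀ x (hZT hx) hc)⟩
      · rintro (⟨hy, hyU⟩ | ⟨v0, ⟨z, hz, rfl⟩, rfl⟩)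
        · exact ⟨y, hy, hF₂id y (fun hc => hyU hc.1)⟩
        · exact ⟨↑z, hz.1, by rw [hεval ↑z z.2]⟩
    have hYsub : Z ∩ U₀ ⊆ U₀ \ A := by
      intro x hx
      exact hTU₀ x (hZT hx.1) hx.2
    have hY'sub : imFun ε.symm (Z ∩ U₀) ⊆ S \ A := imFun_subset ε.symm _
    have hY'card : (imFun ε.symm (Z ∩ U₀)).ncard = (Z ∩ U₀).ncard :=
      imFun_ncard ε.symm _ hYsub
    have hZ₀sub : Z \ U₀ ⊆ T \ U₀ := fun x hx => ⟨hZT hx.1, hx.2⟩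
    have hkey := keyN hS hT hST hU₀ST hIS hIU hd hZ₀sub hYsub hY'sub hY'card.symm
    -- hkey : mrk L (S ∪ (Z \ U₀) ∪ (Z ∩ U₀)) = mrk L (U₀ ∪ (Z \ U₀) ∪ imFun ε.symm (Z ∩ U₀))
    have hid1 : S ∪ (Z \ U₀) ∪ (Z ∩ U₀) = S ∪ Z := by
      ext x
      simp only [Set.mem_union, Set.mem_diff, Set.mem_inter_iff]
      tauto
    have hid2 : U₀ ∪ (Z \ U₀) ∪ imFun ε.symm (Z ∩ U₀) = U₀ ∪ F₂ '' Z := by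
      rw [himg2]
      ext x
      simp only [Set.mem_union, Set.mem_diff, Set.mem_inter_iff]
      tauto
    rw [hid1, hid2] at hkey
    have hrkSU₀ : mrk L S = mrk L U₀ := by
      have h0 := keyN hS hT hST hU₀ST hIS hIU hd
        (Set.empty_subset (T \ U₀)) (Set.empty_subset (U₀ \ A)) (Set.empty_subset (S \ A)) rfl
      simpa using h0
    have hF₂sub : F₂ '' Z ⊆ L.E := by
      rintro y ⟨x, hx, rfl⟩
      exact (hF₂mem x (hZT hx)).1
    have hF₂nU₀ : ∀ y ∈ F₂ '' Z, y ∉ U₀ := by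
      rintro y ⟨x, hx, rfl⟩
      exact (hF₂mem x (hZT hx)).2
    have hWV : imFun e (F₂ '' Z) ⊆ V := by
      rintro y ⟨v0, ⟨wz, hwz, rfl⟩, rfl⟩
      have h1 := heV ↑wz wz.2 (hF₂nU₀ _ hwz)
      have h2 : (⟨(wz : α), wz.2⟩ : ↥L.E) = wz := Subtype.ext rfl
      rwa [h2] at h1
    have hF₂card : (F₂ '' Z).ncard = Z.ncard := by
      rw [himg2, Set.ncard_union_eq ?hdisj hZf.diff (hSA_f.subset hY'sub), hY'card]
      · have := Set.ncard_inter_add_ncard_diff_eq_ncard Z U₀ hZf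
        omega
      case hdisj =>
        rw [Set.disjoint_left]
        intro x hx hx2
        exact Set.disjoint_left.mp hST ((hY'sub hx2).1) (hZT hx.1)
    have hWcard : (imFun e (F₂ '' Z)).ncard = Z.ncard := by
      rw [imFun_ncard e _ hF₂sub, hF₂card]
    -- transports
    have htr1 : mrk L (U₀ ∪ F₂ '' Z) = mrk L' (U ∪ imFun e (F₂ '' Z)) := by
      rw [← hmrkF (U₀ ∪ F₂ '' Z) (Set.union_subset hU₀ST (by rw [← hLE]; exact hF₂sub)),
        imFun_union, hFU₀]
    have htr2 : mrk L U₀ = mrk L' U := by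
      rw [← hmrkF U₀ hU₀ST, hFU₀]
    have hstepN1 : N.Indep Z ↔ mrk L (S ∪ Z) = mrk L S + Z.ncard :=
      indep_N_iff hS hT hMS hNT hST hLE hLI hZT
    have hstepN2 : Q.Indep (imFun e (F₂ '' Z)) ↔
        mrk L' (U ∪ imFun e (F₂ '' Z)) = mrk L' U + (imFun e (F₂ '' Z)).ncard :=
      indep_N_iff hU hV hPU hQV hUV hL'E hL'I hWV
    rw [himg, hstepN1, hstepN2, hWcard, ← htr1, ← htr2, hkey, hrkSU₀]
end
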